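/- Let A be a nonnegative self-adjoint operator on a Hilbert space H and ω > 0. For f ∈ H, if for every g ∈ H the function t ↦ ⟨e^{itA} f, g⟩ extends to an entire function F_g on ℂ with |F_g(z)| ≤ C_g e^{ω|Im z|} and F_g bounded on ℝ, then f ∈ PW_ω. -/

import Mathlib

open MeasureTheory Complex Set Metric

/-- Derivative of `z ↦ exp (I z c) * v`. -/
lemma pw_hasDerivAt (c : ℝ) (w v : ℂ) :
    HasDerivAt (fun z : ℂ => Complex.exp (Complex.I * z * (c : ℂ)) * v)
      (Complex.I * (c : ℂ) * Complex.exp (Complex.I * w * (c : ℂ)) * v) w := by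
  have h1 : HasDerivAt (fun z : ℂ => Complex.I * z * (c : ℂ)) (Complex.I * (c : ℂ)) w := by
    simpa using ((hasDerivAt_id w).const_mul Complex.I).mul_const (c : ℂ)
  have h2 := (h1.cexp).mul_const v
  exact h2.congr_deriv (by ring)

/-- Differentiation under the integral sign for `z ↦ ∫ exp (I z a x) φ x`. -/
lemma pw_deriv {X : Type*} [MeasurableSpace X] {μ : Measure X}
    {a : X → ℝ} (ha_meas : Measurable a) (ha_nonneg : ∀ x, 0 ≤ a x)
    {N : ℝ} {φ : X → ℂ} (hφ_int : Integrable φ μ)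
    (hφ_supp : ∀ x, φ x ≠ 0 → a x ≤ N)
    (hmeas : ∀ z : ℂ, AEStronglyMeasurable
      (fun x => Complex.exp (Complex.I * z * (a x : ℂ)) * φ x) μ)
    (z₀ : ℂ) :
    HasDerivAt (fun z => ∫ x, Complex.exp (Complex.I * z * (a x : ℂ)) * φ x ∂μ)
      (∫ x, Complex.I * (a x : ℂ) * Complex.exp (Complex.I * z₀ * (a x : ℂ)) * φ x ∂μ) z₀ := by
  set K : ℝ := (max N 0) * Real.exp ((|z₀.im| + 1) * max N 0) with hK
  have hre : ∀ (z : ℂ) (x : X), (Complex.I * z * (a x : ℂ)).re = -z.im * a x := by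
    intro z x; simp [Complex.mul_re, Complex.mul_im]
  have him : ∀ z ∈ ball z₀ 1, |z.im| ≤ |z₀.im| + 1 := by
    intro z hz
    have h1 : |z.im - z₀.im| ≤ ‖z - z₀‖ := by
      simpa using Complex.abs_im_le_norm (z - z₀)
    have h2 : ‖z - z₀‖ < 1 := by
      rw [← Complex.dist_eq]; exact mem_ball.mp hz
    calc |z.im| ≤ |z₀.im| + |z.im - z₀.im| := by
          have := abs_sub_abs_le_abs_sub z.im z₀.im; linarith [_root_.abs_abs z.im]
      _ ≤ |z₀.im| + 1 := by linarith
  have hint : Integrable (fun x => Complex.exp (Complex.I * z₀ * (a x : ℂ)) * φ x) μ := by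
    refine (hφ_int.norm.const_mul (Real.exp ((|z₀.im| + 1) * max N 0))).mono' (hmeas z₀) ?_
    filter_upwards with x
    by_cases hx : φ x = 0
    · simp [hx]
    · rw [norm_mul, Complex.norm_exp]
      gcongr
      rw [hre]
      calc -z₀.im * a x ≤ |z₀.im| * a x := by
            nlinarith [abs_nonneg z₀.im, neg_abs_le z₀.im, ha_nonneg x]
        _ ≤ (|z₀.im| + 1) * max N 0 := by
            have h3 : a x ≤ max N 0 := le_trans (hφ_supp x hx) (le_max_left _ _)
            nlinarith [abs_nonneg z₀.im, ha_nonneg x]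
  have hmeas' : AEStronglyMeasurable
      (fun x => Complex.I * (a x : ℂ) * Complex.exp (Complex.I * z₀ * (a x : ℂ)) * φ x) μ := by
    apply AEStronglyMeasurable.mul _ hφ_int.aestronglyMeasurable
    apply Measurable.aestronglyMeasurable
    exact (measurable_const.mul (Complex.measurable_ofReal.comp ha_meas)).mul
      (Complex.measurable_exp.comp (measurable_const.mul (Complex.measurable_ofReal.comp ha_meas)))
  have h_bound : ∀ᵐ x ∂μ, ∀ z ∈ ball z₀ 1,
      ‖Complex.I * (a x : ℂ) * Complex.exp (Complex.I * z * (a x : ℂ)) * φ x‖ ≤ K * ‖φ x‖ := by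
    filter_upwards with x z hz
    by_cases hx : φ x = 0
    · simp [hx]
    · rw [norm_mul, norm_mul, Complex.norm_exp, hre]
      have h4 : ‖Complex.I * (a x : ℂ)‖ = a x := by
        rw [norm_mul, Complex.norm_I, one_mul, Complex.norm_real,
          Real.norm_eq_abs, _root_.abs_of_nonneg (ha_nonneg x)]
      rw [h4]
      have h3 : a x ≤ max N 0 := le_trans (hφ_supp x hx) (le_max_left _ _)
      have h5 : -z.im * a x ≤ (|z₀.im| + 1) * max N 0 := by
        calc -z.im * a x ≤ |z.im| * a x := by
              nlinarith [abs_nonneg z.im, neg_abs_le z.im, ha_nonneg x]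
          _ ≤ (|z₀.im| + 1) * max N 0 := by
              nlinarith [him z hz, abs_nonneg z.im, ha_nonneg x]
      have h6 : a x * Real.exp (-z.im * a x) ≤ (max N 0) * Real.exp ((|z₀.im| + 1) * max N 0) :=
        mul_le_mul h3 (Real.exp_le_exp.2 h5) (Real.exp_pos _).le (le_max_right N 0)
      rw [hK]
      exact mul_le_mul_of_nonneg_right h6 (norm_nonneg _)
  have h_diff : ∀ᵐ x ∂μ, ∀ z ∈ ball z₀ 1,
      HasDerivAt (fun z => Complex.exp (Complex.I * z * (a x : ℂ)) * φ x)
        (Complex.I * (a x : ℂ) * Complex.exp (Complex.I * z * (a x : ℂ)) * φ x) z := by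
    filter_upwards with x z _
    exact pw_hasDerivAt (a x) z (φ x)
  exact (hasDerivAt_integral_of_dominated_loc_of_deriv_le (ball_mem_nhds z₀ one_pos)
    (Filter.Eventually.of_forall fun z => hmeas z) hint hmeas' h_bound
    (hφ_int.norm.const_mul K) h_diff).2

/-- Key step: if the entire extension of `t ↦ ∫_E e^{ita}|f|²` (over
`E = {ω+δ ≤ a ≤ N}`) has exponential type `ω`, then `f = 0` a.e. on `E`. -/
lemma pw_aux {X : Type*} [MeasurableSpace X] {μ : Measure X}
    {a : X → ℝ} (ha_meas : Measurable a) (ha_nonneg : ∀ x, 0 ≤ a x)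
    {ω δ N : ℝ} (hδ : 0 < δ)
    {f : X → ℂ} (hf : MemLp f 2 μ)
    (F : ℂ → ℂ) (C : ℝ) (hFd : Differentiable ℂ F)
    (hFr : ∀ t : ℝ, F t = ∫ x, Complex.exp (Complex.I * (t : ℂ) * (a x : ℂ)) *
      Set.indicator {x | ω + δ ≤ a x ∧ a x ≤ N} (fun x => f x * (starRingEnd ℂ) (f x)) x ∂μ)
    (hFb : ∀ z : ℂ, ‖F z‖ ≤ C * Real.exp (ω * |z.im|)) :
    ∀ᵐ x ∂μ, (ω + δ ≤ a x ∧ a x ≤ N) → f x = 0 := by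
  set E : Set X := {x | ω + δ ≤ a x ∧ a x ≤ N} with hEdef
  have hE : MeasurableSet E := (measurableSet_le measurable_const ha_meas).inter
    (measurableSet_le ha_meas measurable_const)
  set φ : X → ℂ := Set.indicator E (fun x => f x * (starRingEnd ℂ) (f x)) with hφdef
  have hsq : Integrable (fun x => ‖f x‖ ^ 2) μ :=
    (memLp_two_iff_integrable_sq_norm hf.aestronglyMeasurable).1 hf
  have hconj : (fun x => f x * (starRingEnd ℂ) (f x)) = fun x => ((‖f x‖ ^ 2 : ℝ) : ℂ) := by
    funext x
    rw [Complex.mul_conj]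
    norm_cast
    rw [Complex.normSq_eq_norm_sq]
  have hφ_int : Integrable φ μ := by
    rw [hφdef, hconj]
    exact (hsq.ofReal).indicator hE
  have hφ_supp : ∀ x, φ x ≠ 0 → x ∈ E := by
    intro x hx
    by_contra hxE
    exact hx (Set.indicator_of_notMem hxE _)
  set M : ℝ := ∫ x, ‖φ x‖ ∂μ with hMdef
  have hM0 : 0 ≤ M := integral_nonneg fun x => norm_nonneg _
  set G : ℂ → ℂ := fun z => ∫ x, Complex.exp (Complex.I * z * (a x : ℂ)) * φ x ∂μ with hGdef
  have hmeas : ∀ z : ℂ, AEStronglyMeasurable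
      (fun x => Complex.exp (Complex.I * z * (a x : ℂ)) * φ x) μ := by
    intro z
    refine AEStronglyMeasurable.mul ?_ hφ_int.aestronglyMeasurable
    exact (Complex.measurable_exp.comp
      ((measurable_const.mul (Complex.measurable_ofReal.comp ha_meas) : Measurable _))).aestronglyMeasurable
  have hGd : Differentiable ℂ G := fun z =>
    (pw_deriv ha_meas ha_nonneg hφ_int (fun x hx => (hφ_supp x hx).2) hmeas z).differentiableAt
  -- F = G by the identity theorem
  have hFG : F = G := by
    apply AnalyticOnNhd.eq_of_frequently_eq (z₀ := (0 : ℂ))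
      ((hFd.differentiableOn).analyticOnNhd isOpen_univ)
      ((hGd.differentiableOn).analyticOnNhd isOpen_univ)
    have htend : Filter.Tendsto (fun k : ℕ => ((1 / (k + 1) : ℝ) : ℂ)) Filter.atTop
        (nhdsWithin 0 {(0 : ℂ)}ᶜ) := by
      rw [tendsto_nhdsWithin_iff]
      constructor
      · have h1 : Filter.Tendsto (fun k : ℕ => (1 / (k + 1) : ℝ)) Filter.atTop (nhds 0) :=
          tendsto_one_div_add_atTop_nhds_zero_nat
        have h2 : Filter.Tendsto (fun k : ℕ => ((1 / (k + 1) : ℝ) : ℂ)) Filter.atTop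
            (nhds ((0 : ℝ) : ℂ)) := (Complex.continuous_ofReal.tendsto (0 : ℝ)).comp h1
        rwa [Complex.ofReal_zero] at h2
      · filter_upwards with k
        simp only [Set.mem_compl_iff, Set.mem_singleton_iff]
        intro h
        have : (1 / (k + 1 : ℝ)) = 0 := by exact_mod_cast h
        have hk : (0 : ℝ) < 1 / (k + 1) := by positivity
        linarith
    exact htend.frequently (Filter.Frequently.of_forall fun k => hFr _)
  -- decay in the upper half-plane
  have hUHP : ∀ z : ℂ, 0 ≤ z.im → ‖F z‖ ≤ Real.exp (-(ω + δ) * z.im) * M := by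
    intro z hz
    rw [hFG]
    have hle : ∀ᵐ x ∂μ, ‖Complex.exp (Complex.I * z * (a x : ℂ)) * φ x‖ ≤
        Real.exp (-(ω + δ) * z.im) * ‖φ x‖ := by
      filter_upwards with x
      by_cases hx : φ x = 0
      · simp [hx]
      · rw [norm_mul, Complex.norm_exp]
        have hre : (Complex.I * z * (a x : ℂ)).re = -z.im * a x := by
          simp [Complex.mul_re, Complex.mul_im]
        rw [hre]
        have hax : ω + δ ≤ a x := (hφ_supp x hx).1
        have : -z.im * a x ≤ -(ω + δ) * z.im := by nlinarith
        exact mul_le_mul_of_nonneg_right (Real.exp_le_exp.2 this) (norm_nonneg _)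
    calc ‖G z‖ ≤ ∫ x, Real.exp (-(ω + δ) * z.im) * ‖φ x‖ ∂μ :=
          norm_integral_le_of_norm_le (hφ_int.norm.const_mul _) hle
      _ = Real.exp (-(ω + δ) * z.im) * M := by rw [integral_const_mul]
  -- the auxiliary bounded entire function Ψ
  set Ψ : ℂ → ℂ := fun z => F z * Complex.exp (-Complex.I * z * (ω : ℂ)) with hΨdef
  have hΨd : Differentiable ℂ Ψ :=
    hFd.mul (((differentiable_id.const_mul (-Complex.I)).mul_const ((ω : ℂ))).cexp)
  have hren : ∀ z : ℂ, ‖Complex.exp (-Complex.I * z * (ω : ℂ))‖ = Real.exp (ω * z.im) := by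
    intro z
    rw [Complex.norm_exp]
    congr 1
    simp [Complex.mul_re, Complex.mul_im]
    ring
  have hΨ_ub : ∀ z : ℂ, 0 ≤ z.im → ‖Ψ z‖ ≤ M * Real.exp (-δ * z.im) := by
    intro z hz
    rw [hΨdef]
    simp only
    rw [norm_mul, hren]
    calc ‖F z‖ * Real.exp (ω * z.im)
        ≤ (Real.exp (-(ω + δ) * z.im) * M) * Real.exp (ω * z.im) :=
          mul_le_mul_of_nonneg_right (hUHP z hz) (Real.exp_pos _).le
      _ = M * (Real.exp (-(ω + δ) * z.im) * Real.exp (ω * z.im)) := by ring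
      _ = M * Real.exp (-δ * z.im) := by rw [← Real.exp_add]; ring_nf
  have hbdd : Bornology.IsBounded (Set.range Ψ) := by
    rw [isBounded_iff_forall_norm_le]
    refine ⟨max C M, ?_⟩
    rintro y ⟨z, rfl⟩
    by_cases hz : 0 ≤ z.im
    · have h1 := hΨ_ub z hz
      have h2 : Real.exp (-δ * z.im) ≤ 1 := by
        rw [Real.exp_le_one_iff]; nlinarith
      calc ‖Ψ z‖ ≤ M * Real.exp (-δ * z.im) := h1
        _ ≤ M * 1 := by nlinarith [Real.exp_pos (-δ * z.im)]
        _ ≤ max C M := by simp [le_max_right]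
    · push_neg at hz
      rw [hΨdef]
      simp only
      rw [norm_mul, hren]
      have h1 : ‖F z‖ ≤ C * Real.exp (ω * (-z.im)) := by
        have := hFb z
        rwa [abs_of_neg hz] at this
      calc ‖F z‖ * Real.exp (ω * z.im)
          ≤ (C * Real.exp (ω * (-z.im))) * Real.exp (ω * z.im) :=
            mul_le_mul_of_nonneg_right h1 (Real.exp_pos _).le
        _ = C * Real.exp (ω * (-z.im) + ω * z.im) := by rw [Real.exp_add]; ring
        _ = C := by ring_nf; rw [Real.exp_zero]; ring
        _ ≤ max C M := le_max_left _ _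
  have hconst : ∀ z : ℂ, Ψ z = Ψ 0 := fun z => hΨd.apply_eq_apply_of_bounded hbdd z 0
  have hΨ0 : Ψ 0 = F 0 := by
    rw [hΨdef]; simp
  -- conclude F 0 = 0
  have hF00 : F 0 = 0 := by
    have hub : ∀ t : ℝ, 0 ≤ t → ‖F 0‖ ≤ M * Real.exp (-δ * t) := by
      intro t ht
      have him : (Complex.I * (t : ℂ)).im = t := by simp
      have h1 := hΨ_ub (Complex.I * (t : ℂ)) (by rw [him]; exact ht)
      rw [hconst (Complex.I * (t : ℂ)), hΨ0, him] at h1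
      exact h1
    have hlim : Filter.Tendsto (fun t : ℝ => M * Real.exp (-δ * t)) Filter.atTop (nhds 0) := by
      have h1 : Filter.Tendsto (fun t : ℝ => δ * t) Filter.atTop Filter.atTop :=
        Filter.Tendsto.const_mul_atTop hδ Filter.tendsto_id
      have h2 := Real.tendsto_exp_neg_atTop_nhds_zero.comp h1
      have h3 := h2.const_mul M
      simpa [Function.comp, neg_mul, mul_zero] using h3
    have hle : ‖F 0‖ ≤ 0 :=
      ge_of_tendsto hlim ((Filter.eventually_ge_atTop 0).mono fun t ht => hub t ht)
    simpa using le_antisymm hle (norm_nonneg _)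
  -- hence ∫ φ = 0
  have hintφ : (∫ x, φ x ∂μ) = 0 := by
    have h0 := hFr 0
    rw [Complex.ofReal_zero] at h0
    have heq : (∫ x, Complex.exp (Complex.I * (0 : ℂ) * (a x : ℂ)) * φ x ∂μ)
        = ∫ x, φ x ∂μ := by
      apply integral_congr_ae
      filter_upwards with x
      simp
    rw [← heq, ← h0, hF00]
  -- pass to the real function
  set ψ : X → ℝ := Set.indicator E (fun x => ‖f x‖ ^ 2) with hψdef
  have hψ_int : Integrable ψ μ := hsq.indicator hE
  have hφψ : φ = fun x => ((ψ x : ℝ) : ℂ) := by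
    funext x
    rw [hφdef, hψdef, hconj]
    by_cases hx : x ∈ E
    · rw [Set.indicator_of_mem hx, Set.indicator_of_mem hx]
    · rw [Set.indicator_of_notMem hx, Set.indicator_of_notMem hx, Complex.ofReal_zero]
  have hψint : (∫ x, ψ x ∂μ) = 0 := by
    have h := hintφ
    simp only [hφψ] at h
    have h2 := Complex.ofRealCLM.integral_comp_comm hψ_int
    simp only [Complex.ofRealCLM_apply] at h2
    rw [h2] at h
    exact_mod_cast h
  have hψnn : 0 ≤ᵐ[μ] ψ := by
    filter_upwards with x
    exact Set.indicator_nonneg (fun y _ => by positivity) x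
  have hψ0 : ψ =ᵐ[μ] 0 := (integral_eq_zero_iff_of_nonneg_ae hψnn hψ_int).1 hψint
  filter_upwards [hψ0] with x hx hxE
  have hxE' : x ∈ E := hxE
  rw [hψdef] at hx
  simp only [Pi.zero_apply] at hx
  rw [Set.indicator_of_mem hxE'] at hx
  have : ‖f x‖ = 0 := by nlinarith [norm_nonneg (f x)]
  simpa using this

/-- Abstract Paley-Wiener theorem, converse part. With the nonnegative self-adjoint operator
`A` modeled as multiplication by a nonnegative measurable `a` on `L²(X,μ)`: if for every
`g ∈ L²` the function `t ↦ ⟨e^{itA} f, g⟩` extends to an entire function `F_g` with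
`|F_g(z)| ≤ C_g e^{ω |Im z|}` which is bounded on `ℝ`, then `f ∈ PW_ω`, i.e. `f` vanishes
a.e. on the set where `a > ω`. -/
theorem stmt16 {X : Type*} [MeasurableSpace X] (μ : Measure X)
    (a : X → ℝ) (ha_meas : Measurable a) (ha_nonneg : ∀ x, 0 ≤ a x)
    (ω : ℝ) (hω : 0 < ω)
    (f : X → ℂ) (hf : MemLp f 2 μ)
    (hext : ∀ g : X → ℂ, MemLp g 2 μ →
      ∃ (F : ℂ → ℂ) (C B : ℝ), Differentiable ℂ F ∧
        (∀ t : ℝ, F t =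
          ∫ x, Complex.exp (Complex.I * t * (a x : ℂ)) * f x * (starRingEnd ℂ) (g x) ∂μ) ∧
        (∀ z : ℂ, ‖F z‖ ≤ C * Real.exp (ω * |z.im|)) ∧
        (∀ t : ℝ, ‖F t‖ ≤ B)) :
    ∀ᵐ x ∂μ, ω < a x → f x = 0 := by
  have key : ∀ n : ℕ, ∀ᵐ x ∂μ,
      (ω + 1 / ((n : ℝ) + 1) ≤ a x ∧ a x ≤ (n : ℝ)) → f x = 0 := by
    intro n
    have hE : MeasurableSet {x | ω + 1 / ((n : ℝ) + 1) ≤ a x ∧ a x ≤ (n : ℝ)} :=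
      (measurableSet_le measurable_const ha_meas).inter
        (measurableSet_le ha_meas measurable_const)
    obtain ⟨F, C, B, hFd, hFr, hFb, -⟩ :=
      hext (Set.indicator {x | ω + 1 / ((n : ℝ) + 1) ≤ a x ∧ a x ≤ (n : ℝ)} f)
        (hf.indicator hE)
    refine pw_aux ha_meas ha_nonneg (δ := 1 / ((n : ℝ) + 1)) (N := (n : ℝ))
      (by positivity) hf F C hFd ?_ hFb
    intro t
    rw [hFr t]
    apply integral_congr_ae
    filter_upwards with x
    by_cases hx : x ∈ {x | ω + 1 / ((n : ℝ) + 1) ≤ a x ∧ a x ≤ (n : ℝ)}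
    · simp only [Set.indicator_of_mem hx]
      ring
    · simp only [Set.indicator_of_notMem hx]
      simp
  filter_upwards [ae_all_iff.2 key] with x hx hωx
  obtain ⟨n₁, hn₁⟩ := exists_nat_ge (a x)
  obtain ⟨n₂, hn₂⟩ := exists_nat_one_div_lt (show (0 : ℝ) < a x - ω by linarith)
  refine hx (max n₁ n₂) ⟨?_, ?_⟩
  · have h1 : (1 : ℝ) / ((max n₁ n₂ : ℕ) + 1) ≤ 1 / ((n₂ : ℝ) + 1) := by
      apply one_div_le_one_div_of_le
      · positivity
      · have : (n₂ : ℝ) ≤ ((max n₁ n₂ : ℕ) : ℝ) := by exact_mod_cast le_max_right n₁ n₂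
        linarith
    linarith
  · have : (n₁ : ℝ) ≤ ((max n₁ n₂ : ℕ) : ℝ) := by exact_mod_cast le_max_left n₁ n₂
    linarith
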